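/- The uniform limit y of the extended Picard iteration satisfies the integral equation y(x) = y_0(x) + ∫_a^x e^{(x-s)A} G(s, y(s)) ds for all x in [a,b]. -/

import Mathlib

set_option maxHeartbeats 1000000 in
open NormedSpace intervalIntegral Filter in
/-- The uniform limit y of the extended Picard iteration satisfies the integral
equation y(x) = y_0(x) + ∫_a^x e^{(x-s)A} G(s, y(s)) ds for all x in [a,b]. -/
theorem stmt_4 (N : ℕ) (a b : ℝ) (hab : a ≤ b)
    (A : EuclideanSpace ℝ (Fin N) →L[ℝ] EuclideanSpace ℝ (Fin N))
    (G : ℝ → EuclideanSpace ℝ (Fin N) → EuclideanSpace ℝ (Fin N))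
    (hGcont : ContinuousOn (fun p : ℝ × EuclideanSpace ℝ (Fin N) => G p.1 p.2)
      (Set.Icc a b ×ˢ Set.univ))
    (K : NNReal) (hGlip : ∀ x ∈ Set.Icc a b, LipschitzWith K (G x))
    (y : ℕ → ℝ → EuclideanSpace ℝ (Fin N))
    (hy0 : ContinuousOn (y 0) (Set.Icc a b))
    (hiter : ∀ k : ℕ, ∀ x : ℝ, y (k + 1) x
      = y 0 x + ∫ s in a..x, (exp ((x - s) • A)) (G s (y k s)))
    (ylim : ℝ → EuclideanSpace ℝ (Fin N))
    (hconv : TendstoUniformlyOn y ylim atTop (Set.Icc a b)) :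
    ∀ x ∈ Set.Icc a b,
      ylim x = y 0 x + ∫ s in a..x, (exp ((x - s) • A)) (G s (ylim s)) := by
  letI : NormedAlgebra ℚ (EuclideanSpace ℝ (Fin N) →L[ℝ] EuclideanSpace ℝ (Fin N)) :=
    NormedAlgebra.restrictScalars ℚ ℝ _
  -- bound on the exponential
  have hexpc : Continuous fun t : ℝ => exp (t • A) :=
    exp_continuous.comp (continuous_id.smul continuous_const)
  obtain ⟨M, hM⟩ := (isCompact_Icc (a := a - b) (b := b - a)).exists_bound_of_continuousOn
    hexpc.continuousOn
  have hM0 : 0 ≤ M := le_trans (norm_nonneg _) (hM 0 ⟨by linarith, by linarith⟩)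
  -- composing G with a continuous function is continuous
  have hGy : ∀ f : ℝ → EuclideanSpace ℝ (Fin N), ContinuousOn f (Set.Icc a b) →
      ContinuousOn (fun s => G s (f s)) (Set.Icc a b) := fun f hf =>
    hGcont.comp (continuousOn_id.prodMk hf) (fun s hs => ⟨hs, Set.mem_univ _⟩)
  -- each iterate is continuous
  have hycont : ∀ k, ContinuousOn (y k) (Set.Icc a b) := by
    intro k
    induction k with
    | zero => exact hy0
    | succ k ih =>
      have hg : ContinuousOn (fun s => exp ((-s) • A) (G s (y k s))) (Set.Icc a b) :=
        ContinuousOn.clm_apply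
          ((exp_continuous.comp (continuous_neg.smul continuous_const)).continuousOn)
          (hGy _ ih)
      have hint : MeasureTheory.IntegrableOn
          (fun s => exp ((-s) • A) (G s (y k s))) (Set.uIcc a b) := by
        rw [Set.uIcc_of_le hab]; exact hg.integrableOn_Icc
      have hF := intervalIntegral.continuousOn_primitive_interval hint
      rw [Set.uIcc_of_le hab] at hF
      have heq : ∀ x ∈ Set.Icc a b, y (k+1) x
          = y 0 x + exp (x • A) (∫ s in a..x, exp ((-s) • A) (G s (y k s))) := by
        intro x hx
        rw [hiter]
        congr 1
        have hgi : IntervalIntegrable (fun s => exp ((-s) • A) (G s (y k s)))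
            MeasureTheory.volume a x := by
          apply ContinuousOn.intervalIntegrable
          apply hg.mono
          rw [Set.uIcc_of_le hx.1]
          exact Set.Icc_subset_Icc le_rfl hx.2
        rw [← (exp (x • A)).intervalIntegral_comp_comm hgi]
        apply intervalIntegral.integral_congr
        intro s _
        have hcomm : Commute (x • A) ((-s) • A) := by
          show _ * _ = _ * _
          ext v
          simp [ContinuousLinearMap.mul_apply, map_smul]
        have hsplit : (x - s) • A = x • A + (-s) • A := by module
        show (exp ((x - s) • A)) (G s (y k s))
            = (exp (x • A)) ((exp ((-s) • A)) (G s (y k s)))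
        rw [hsplit, exp_add_of_commute hcomm, ContinuousLinearMap.mul_apply]
      apply ContinuousOn.congr _ heq
      exact hy0.add (ContinuousOn.clm_apply hexpc.continuousOn hF)
  -- ylim is continuous
  have hlimcont : ContinuousOn ylim (Set.Icc a b) :=
    hconv.continuousOn (Filter.Eventually.of_forall hycont).frequently
  intro x hx
  have hsub : Set.uIcc a x ⊆ Set.Icc a b := by
    rw [Set.uIcc_of_le hx.1]; exact Set.Icc_subset_Icc le_rfl hx.2
  have hsub' : Set.uIoc a x ⊆ Set.Icc a b := fun s hs =>
    hsub (Set.uIoc_subset_uIcc hs)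
  -- integrability of the integrands
  have hint : ∀ f : ℝ → EuclideanSpace ℝ (Fin N), ContinuousOn f (Set.Icc a b) →
      IntervalIntegrable (fun s => exp ((x - s) • A) (G s (f s)))
        MeasureTheory.volume a x := by
    intro f hf
    apply ContinuousOn.intervalIntegrable
    exact ContinuousOn.clm_apply
      ((hexpc.comp (continuous_const.sub continuous_id)).continuousOn)
      (((hGy f hf).mono hsub))
  -- convergence of the integrals
  have key : Tendsto (fun k => ∫ s in a..x, exp ((x - s) • A) (G s (y k s))) atTop
      (nhds (∫ s in a..x, exp ((x - s) • A) (G s (ylim s)))) := by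
    rw [Metric.tendsto_atTop]
    intro ε hε
    set C : ℝ := M * K * (b - a) + 1 with hC
    have hCpos : 0 < C := by
      have h0 : (0:ℝ) ≤ M * K * (b - a) :=
        mul_nonneg (mul_nonneg hM0 K.coe_nonneg) (by linarith)
      rw [hC]; linarith
    have hδ : 0 < ε / C := by positivity
    rw [Metric.tendstoUniformlyOn_iff] at hconv
    obtain ⟨n0, hn0⟩ := (hconv (ε / C) hδ).exists_forall_of_atTop
    refine ⟨n0, fun k hk => ?_⟩
    rw [dist_eq_norm, ← intervalIntegral.integral_sub (hint _ (hycont k)) (hint _ hlimcont)]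
    have hbound : ∀ s ∈ Set.uIoc a x,
        ‖exp ((x - s) • A) (G s (y k s)) - exp ((x - s) • A) (G s (ylim s))‖
          ≤ M * K * (ε / C) := by
      intro s hs
      have hs' : s ∈ Set.Icc a b := hsub' hs
      rw [← map_sub]
      calc ‖exp ((x - s) • A) (G s (y k s) - G s (ylim s))‖
          ≤ ‖exp ((x - s) • A)‖ * ‖G s (y k s) - G s (ylim s)‖ :=
            (exp ((x - s) • A)).le_opNorm _
        _ ≤ M * (K * (ε / C)) := by
            apply mul_le_mul
            · exact hM (x - s) ⟨by linarith [hx.1, hx.2, hs'.1, hs'.2],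
                by linarith [hx.1, hx.2, hs'.1, hs'.2]⟩
            · rw [← dist_eq_norm]
              calc dist (G s (y k s)) (G s (ylim s)) ≤ K * dist (y k s) (ylim s) :=
                    (hGlip s hs').dist_le_mul _ _
                _ ≤ K * (ε / C) := by
                    apply mul_le_mul_of_nonneg_left _ K.coe_nonneg
                    rw [dist_comm]
                    exact (hn0 k hk s hs').le
            · exact norm_nonneg _
            · exact hM0
        _ = M * K * (ε / C) := by ring
    calc ‖∫ s in a..x, (exp ((x - s) • A) (G s (y k s))
            - exp ((x - s) • A) (G s (ylim s)))‖
        ≤ M * K * (ε / C) * |x - a| :=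
          intervalIntegral.norm_integral_le_of_norm_le_const hbound
      _ ≤ M * K * (ε / C) * (b - a) := by
          apply mul_le_mul_of_nonneg_left _
            (mul_nonneg (mul_nonneg hM0 K.coe_nonneg) hδ.le)
          rw [abs_of_nonneg (by linarith [hx.1])]
          linarith [hx.1, hx.2]
      _ < ε := by
          rw [hC]
          rw [div_eq_inv_mul]
          have hKnn : (0:ℝ) ≤ K := K.coe_nonneg
          have h1 : M * K * (b - a) < M * ↑K * (b - a) + 1 := by linarith
          calc M * ↑K * ((M * ↑K * (b - a) + 1)⁻¹ * ε) * (b - a)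
              = (M * ↑K * (b - a)) / (M * ↑K * (b - a) + 1) * ε := by ring
            _ < 1 * ε := by
                apply mul_lt_mul_of_pos_right _ hε
                rw [div_lt_one (by positivity)]
                exact h1
            _ = ε := one_mul ε
  have h1 : Tendsto (fun k => y (k + 1) x) atTop (nhds (ylim x)) :=
    (hconv.tendsto_at hx).comp (tendsto_add_atTop_nat 1)
  have h2 : Tendsto (fun k => y (k + 1) x) atTop
      (nhds (y 0 x + ∫ s in a..x, exp ((x - s) • A) (G s (ylim s)))) := by
    simp only [hiter]
    exact tendsto_const_nhds.add key
  exact tendsto_nhds_unique h1 h2
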